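/- Let E be a real inner product space and let R : E → ℝ be differentiable, μ_R-strongly convex (μ_R ≥ 0) and L_R-smooth with L_R > 0. Let x¹, …, x^M ∈ E with average x̄ = (1/M)Σ_m x^m, set V = (1/M)Σ_m ‖x^m − x̄‖², r̄ = (1/M)Σ_m ∇R(x^m), R̄ = (1/M)Σ_m R(x^m), and let x* ∈ E. Then: −2⟨x̄ − x*, r̄⟩ ≤ −(R̄ − R(x*)) + 2L_R·V − μ_R‖x* − x̄‖² − ⟨∇R(x*), x̄ − x*⟩. -/

import Mathlib

open RealInnerProductSpace

/-- Lemma 4 (lem:inner_2): bound on `−2⟨x̄ − x*, r̄⟩` for a `μ_R`-strongly convex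
and `L_R`-smooth function `R`, in terms of the average Bregman gap `R̄ − R(x*)`,
the dispersion `V` of the points, and the distance to `x*`. -/
theorem stmt_5 {E : Type*} [NormedAddCommGroup E] [InnerProductSpace ℝ E] [CompleteSpace E]
    (M : ℕ) (hM : 0 < M)
    (R : E → ℝ) (R' : E → E) (μR LR : ℝ) (hμR : 0 ≤ μR) (hLR : 0 < LR)
    (hRdiff : ∀ z, HasGradientAt R (R' z) z)
    (hRconv : ∀ x y : E, μR / 2 * ‖x - y‖ ^ 2 ≤ R y - R x - ⟪R' x, y - x⟫)
    (hRsmooth : ∀ x y : E, R y - R x - ⟪R' x, y - x⟫ ≤ LR / 2 * ‖x - y‖ ^ 2)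
    (x : Fin M → E) (xstar : E) (xbar rbar : E) (Rbar V : ℝ)
    (hxbar : xbar = (M : ℝ)⁻¹ • ∑ m, x m)
    (hV : V = (M : ℝ)⁻¹ * ∑ m, ‖x m - xbar‖ ^ 2)
    (hrbar : rbar = (M : ℝ)⁻¹ • ∑ m, R' (x m))
    (hRbar : Rbar = (M : ℝ)⁻¹ * ∑ m, R (x m)) :
    -2 * ⟪xbar - xstar, rbar⟫
      ≤ -(Rbar - R xstar) + 2 * LR * V - μR * ‖xstar - xbar‖ ^ 2
        - ⟪R' xstar, xbar - xstar⟫ := by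
  have hN : (0:ℝ) < (M:ℝ) := by exact_mod_cast hM
  have hN0 : (M:ℝ) ≠ 0 := ne_of_gt hN
  -- sum of deviations is zero
  have hdev : ∑ m, (x m - xbar) = (0:E) := by
    rw [Finset.sum_sub_distrib, hxbar, Finset.sum_const, Finset.card_univ, Fintype.card_fin,
      ← Nat.cast_smul_eq_nsmul ℝ, smul_smul, mul_inv_cancel₀ hN0, one_smul, sub_self]
  -- sum of gradients
  have hgsum : ∑ m, R' (x m) = (M:ℝ) • rbar := by
    rw [hrbar, smul_smul, mul_inv_cancel₀ hN0, one_smul]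
  -- V nonneg
  have hVnn : 0 ≤ V := by
    rw [hV]
    positivity
  -- per-m key inequality
  have key : ∀ m : Fin M, 2 * ⟪xstar - xbar, R' (x m)⟫ ≤
      2 * R xstar - 2 * R xbar + LR * ‖x m - xbar‖ ^ 2 - μR * ‖x m - xstar‖ ^ 2 := by
    intro m
    have h1 := hRconv (x m) xstar
    have h2 := hRsmooth (x m) xbar
    have hsplit : ⟪xstar - xbar, R' (x m)⟫
        = ⟪R' (x m), xstar - x m⟫ - ⟪R' (x m), xbar - x m⟫ := by
      rw [real_inner_comm, show xstar - xbar = (xstar - x m) - (xbar - x m) by abel,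
        inner_sub_right]
    linarith [h1, h2]
  -- sum the key inequality
  have hsum : ∑ m : Fin M, 2 * ⟪xstar - xbar, R' (x m)⟫ ≤ ∑ m : Fin M, (2 * R xstar - 2 * R xbar + LR * ‖x m - xbar‖ ^ 2 - μR * ‖x m - xstar‖ ^ 2) := Finset.sum_le_sum (fun m _ => key m)
  have hlhs : ∑ m : Fin M, 2 * ⟪xstar - xbar, R' (x m)⟫ = 2 * (M:ℝ) * ⟪xstar - xbar, rbar⟫ := by
    rw [← Finset.mul_sum, ← inner_sum, hgsum, real_inner_smul_right]
    ring
  have hrhs : ∑ m : Fin M, (2 * R xstar - 2 * R xbar + LR * ‖x m - xbar‖ ^ 2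
        - μR * ‖x m - xstar‖ ^ 2)
      = 2 * (M:ℝ) * R xstar - 2 * (M:ℝ) * R xbar + LR * ∑ m, ‖x m - xbar‖ ^ 2
        - μR * ∑ m, ‖x m - xstar‖ ^ 2 := by
    simp [Finset.sum_add_distrib, Finset.sum_sub_distrib, Finset.mul_sum, Finset.sum_const,
      Finset.card_univ, Fintype.card_fin]
    ring
  rw [hlhs, hrhs] at hsum
  -- bias-variance identity
  have hbv : ∑ m, ‖x m - xstar‖ ^ 2
      = (∑ m, ‖x m - xbar‖ ^ 2) + (M:ℝ) * ‖xbar - xstar‖ ^ 2 := by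
    have expand : ∀ m : Fin M, ‖x m - xstar‖ ^ 2
        = ‖x m - xbar‖ ^ 2 + 2 * ⟪x m - xbar, xbar - xstar⟫ + ‖xbar - xstar‖ ^ 2 := by
      intro m
      have := norm_add_sq_real (x m - xbar) (xbar - xstar)
      rw [show (x m - xbar) + (xbar - xstar) = x m - xstar by abel] at this
      linarith
    calc ∑ m, ‖x m - xstar‖ ^ 2
        = ∑ m, (‖x m - xbar‖ ^ 2 + 2 * ⟪x m - xbar, xbar - xstar⟫ + ‖xbar - xstar‖ ^ 2) := by
          exact Finset.sum_congr rfl (fun m _ => expand m)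
      _ = (∑ m, ‖x m - xbar‖ ^ 2) + 2 * ⟪∑ m, (x m - xbar), xbar - xstar⟫
            + (M:ℝ) * ‖xbar - xstar‖ ^ 2 := by
          rw [Finset.sum_add_distrib, Finset.sum_add_distrib, sum_inner, ← Finset.mul_sum,
            Finset.sum_const, Finset.card_univ, Fintype.card_fin, nsmul_eq_mul]
      _ = (∑ m, ‖x m - xbar‖ ^ 2) + (M:ℝ) * ‖xbar - xstar‖ ^ 2 := by
          rw [hdev, inner_zero_left]; ring
  -- average smoothness at xbar: Rbar ≤ R xbar + LR/2 * V
  have hRbar_le : Rbar ≤ R xbar + LR / 2 * V := by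
    have h := Finset.sum_le_sum (fun m (_ : m ∈ Finset.univ) => hRsmooth xbar (x m))
    have hL : ∑ m : Fin M, (R (x m) - R xbar - ⟪R' xbar, x m - xbar⟫)
        = (∑ m, R (x m)) - (M:ℝ) * R xbar := by
      rw [Finset.sum_sub_distrib, Finset.sum_sub_distrib, ← inner_sum, hdev, inner_zero_right,
        Finset.sum_const, Finset.card_univ, Fintype.card_fin, nsmul_eq_mul]
      ring
    have hR : ∑ m : Fin M, LR / 2 * ‖xbar - x m‖ ^ 2 = LR / 2 * ((M:ℝ) * V) := by
      rw [← Finset.mul_sum, hV]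
      congr 1
      rw [← mul_assoc, mul_inv_cancel₀ hN0, one_mul]
      exact Finset.sum_congr rfl (fun m _ => by rw [norm_sub_rev])
    rw [hL, hR] at h
    rw [hRbar]
    rw [inv_mul_le_iff₀ hN] at *
    nlinarith [hVnn]
  -- convexity at xstar
  have hconv2 : ⟪R' xstar, xbar - xstar⟫ ≤ R xbar - R xstar := by
    have := hRconv xstar xbar
    nlinarith [sq_nonneg ‖xstar - xbar‖]
  -- finish
  have hVeq : (M:ℝ) * V = ∑ m, ‖x m - xbar‖ ^ 2 := by
    rw [hV, ← mul_assoc, mul_inv_cancel₀ hN0, one_mul]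
  have hinner : ⟪xbar - xstar, rbar⟫ = -⟪xstar - xbar, rbar⟫ := by
    rw [show xbar - xstar = -(xstar - xbar) by abel, inner_neg_left]
  have hnorm : ‖xstar - xbar‖ = ‖xbar - xstar‖ := norm_sub_rev _ _
  rw [hbv, ← hVeq] at hsum
  rw [hinner, hnorm]
  have hsum2 : 2 * ⟪xstar - xbar, rbar⟫
      ≤ 2 * R xstar - 2 * R xbar + LR * V - μR * V - μR * ‖xbar - xstar‖ ^ 2 := by
    apply le_of_mul_le_mul_left _ hN
    calc (M:ℝ) * (2 * ⟪xstar - xbar, rbar⟫) = 2 * (M:ℝ) * ⟪xstar - xbar, rbar⟫ := by ring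
      _ ≤ 2 * (M:ℝ) * R xstar - 2 * (M:ℝ) * R xbar + LR * ((M:ℝ) * V)
          - μR * ((M:ℝ) * V + (M:ℝ) * ‖xbar - xstar‖ ^ 2) := hsum
      _ = (M:ℝ) * (2 * R xstar - 2 * R xbar + LR * V - μR * V - μR * ‖xbar - xstar‖ ^ 2) := by
          ring
  linarith [hsum2, hRbar_le, hconv2, mul_nonneg hμR hVnn, mul_nonneg hLR.le hVnn]
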